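/- Under the dilations D_λ(t,x) = (λ²t, D⁰_λ x) with D⁰_λ = diag(λ I_{p₀}, λ³ I_{p₁}, …, λ^{2r+1} I_{p_r}), and B a matrix in Kolmogorov block form with null *-blocks, one has D⁰_λ e^{δB} x = e^{δλ²B} D⁰_λ x for all x ∈ ℝ^d, δ, λ ∈ ℝ; consequently D_λ e^{δY}(z) = e^{δλ²Y}(D_λ z) for all z ∈ ℝ^{d+1}. -/

import Mathlib

open NormedSpace

lemma semiconj_exp {𝔸 : Type*} [NormedRing 𝔸] [NormedAlgebra ℝ 𝔸] [CompleteSpace 𝔸]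
    {D A C : 𝔸} (h : D * A = C * D) : D * exp A = exp C * D := by
  have hpow : ∀ n : ℕ, D * A ^ n = C ^ n * D := fun n => (SemiconjBy.pow_right h n)
  simp only [exp_eq_tsum (𝕂 := ℝ)]
  rw [← (expSeries_summable' (𝕂 := ℝ) A).tsum_mul_left D,
    ← (expSeries_summable' (𝕂 := ℝ) C).tsum_mul_right D]
  congr 1
  funext n
  rw [mul_smul_comm, hpow, smul_mul_assoc]

lemma matrix_semiconj_exp {d : ℕ} {D A C : Matrix (Fin d) (Fin d) ℝ}
    (h : D * A = C * D) : D * exp A = exp C * D := by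
  letI : SeminormedRing (Matrix (Fin d) (Fin d) ℝ) := Matrix.linftyOpSemiNormedRing
  letI : NormedRing (Matrix (Fin d) (Fin d) ℝ) := Matrix.linftyOpNormedRing
  letI : NormedAlgebra ℝ (Matrix (Fin d) (Fin d) ℝ) := Matrix.linftyOpNormedAlgebra
  exact semiconj_exp h

/-- Spatial dilation `D⁰_λ`: the coordinate `x_i`, lying in the block of index `w i`,
is scaled by `λ^(2 (w i) + 1)`. -/
def dil0 {d : ℕ} (w : Fin d → ℕ) (lam : ℝ) (x : Fin d → ℝ) : Fin d → ℝ :=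
  fun i => lam ^ (2 * w i + 1) * x i

/-- Full dilation `D_λ(t,x) = (λ² t, D⁰_λ x)`. -/
def dil {d : ℕ} (w : Fin d → ℕ) (lam : ℝ) (z : ℝ × (Fin d → ℝ)) : ℝ × (Fin d → ℝ) :=
  (lam ^ 2 * z.1, dil0 w lam z.2)

/-- The flow of `Y`: `e^{δY}(t,x) = (t+δ, e^{δB}x)`. -/
noncomputable def flowY {d : ℕ} (B : Matrix (Fin d) (Fin d) ℝ)
    (δ : ℝ) (z : ℝ × (Fin d → ℝ)) : ℝ × (Fin d → ℝ) :=
  (z.1 + δ, (NormedSpace.exp (δ • B)).mulVec z.2)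

/-- For `B` in Kolmogorov block form with null `*`-blocks (encoded by a block-index
function `w`: the entry `B i j` can be nonzero only if coordinate `i` lies in the block
following that of `j`), one has `D⁰_λ e^{δB} x = e^{δλ²B} D⁰_λ x`, and consequently
`D_λ e^{δY}(z) = e^{δλ²Y}(D_λ z)`. -/
theorem stmt4 {d : ℕ} (w : Fin d → ℕ) (B : Matrix (Fin d) (Fin d) ℝ)
    (hB : ∀ i j, B i j ≠ 0 → w i = w j + 1) :
    (∀ (x : Fin d → ℝ) (δ lam : ℝ),
      dil0 w lam ((NormedSpace.exp (δ • B)).mulVec x)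
        = (NormedSpace.exp ((δ * lam ^ 2) • B)).mulVec (dil0 w lam x)) ∧
    (∀ (z : ℝ × (Fin d → ℝ)) (δ lam : ℝ),
      dil w lam (flowY B δ z) = flowY B (δ * lam ^ 2) (dil w lam z)) := by
  have key : ∀ (x : Fin d → ℝ) (δ lam : ℝ),
      dil0 w lam ((NormedSpace.exp (δ • B)).mulVec x)
        = (NormedSpace.exp ((δ * lam ^ 2) • B)).mulVec (dil0 w lam x) := by
    intro x δ lam
    set D : Matrix (Fin d) (Fin d) ℝ := Matrix.diagonal (fun i => lam ^ (2 * w i + 1)) with hD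
    have hsc : D * (δ • B) = ((δ * lam ^ 2) • B) * D := by
      ext i j
      simp only [hD, Matrix.diagonal_mul, Matrix.mul_diagonal, Matrix.smul_apply, smul_eq_mul]
      by_cases hb : B i j = 0
      · simp [hb]
      · rw [hB i j hb]
        ring
    have hdil : ∀ y : Fin d → ℝ, dil0 w lam y = D.mulVec y := by
      intro y
      funext i
      simp [hD, dil0, Matrix.mulVec_diagonal]
    rw [hdil, hdil, Matrix.mulVec_mulVec, Matrix.mulVec_mulVec, matrix_semiconj_exp hsc]
  refine ⟨key, ?_⟩
  intro z δ lam
  simp only [dil, flowY, key]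
  refine Prod.ext ?_ rfl
  simp only
  ring
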